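/- Let G be a group, H a subgroup of G, K a group, and P a set equipped with: (i) a free right K-action; (ii) a surjective map π̂: P → G/H satisfying π̂(p·k) = π̂(p) for all p, k, and such that π̂(p) = π̂(q) implies q = p·k for some k ∈ K; (iii) a left G-action on P satisfying g·(p·k) = (g·p)·k and π̂(g·p) = g·π̂(p). Make the product group G × K act on P by (g,k)·p := g·(p·k⁻¹). Then: (1) this G × K-action on P is transitive; (2) for any point p₀ ∈ P with π̂(p₀) = eH (e the identity of G), the first projection G × K → G restricts to a group isomorphism from the stabilizer of p₀ under the G × K-action onto H. -/

import Mathlib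

/-- (Key step in the proof of the paper's Lemma 3.2.)
With `P` as in Lemma 3.2, the product group `G × K` acts on `P` by
`(g,k) · p := g · (p · k⁻¹)`; this action is transitive, and for any basepoint
`p₀` over `eH` the first projection restricts to a group isomorphism from the
stabiliser of `p₀` onto `H`. -/
theorem statement1 {G K : Type*} [Group G] [Group K] (H : Subgroup G)
    (P : Type*) (gAct : G → P → P) (kAct : P → K → P) (πhat : P → G ⧸ H)
    -- (i) right `K`-action, free
    (hk_one : ∀ p, kAct p 1 = p)
    (hk_mul : ∀ p k k', kAct p (k * k') = kAct (kAct p k) k')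
    (hk_free : ∀ p k, kAct p k = p → k = 1)
    -- (ii) `π̂` surjective, `K`-invariant, with fibres the `K`-orbits
    (hπ_surj : Function.Surjective πhat)
    (hπ_k : ∀ p k, πhat (kAct p k) = πhat p)
    (hπ_fib : ∀ p q, πhat p = πhat q → ∃ k, q = kAct p k)
    -- (iii) left `G`-action, commuting with `K`, lifting the action on `G/H`
    (hg_one : ∀ p, gAct 1 p = p)
    (hg_mul : ∀ g g' p, gAct (g * g') p = gAct g (gAct g' p))
    (hgk : ∀ g p k, gAct g (kAct p k) = kAct (gAct g p) k)
    (hπ_g : ∀ g p, πhat (gAct g p) = g • πhat p) :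
    -- (1) the `G × K`-action `(g,k) · p = g · (p · k⁻¹)` is transitive
    (∀ p q : P, ∃ (g : G) (k : K), gAct g (kAct p k⁻¹) = q) ∧
    -- (2) the stabiliser of a basepoint over `eH` is a subgroup of `G × K`
    -- on which the first projection is injective with image exactly `H`
    (∀ p₀ : P, πhat p₀ = (QuotientGroup.mk (1 : G) : G ⧸ H) →
      ∃ S : Subgroup (G × K),
        (S : Set (G × K)) = {x : G × K | gAct x.1 (kAct p₀ x.2⁻¹) = p₀} ∧
        Set.InjOn Prod.fst (S : Set (G × K)) ∧
        Prod.fst '' (S : Set (G × K)) = (H : Set G)) := by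
  have hg_cancel : ∀ (g : G) (p q : P), gAct g p = gAct g q → p = q := by
    intro g p q h
    have := congrArg (gAct g⁻¹) h
    rwa [← hg_mul, ← hg_mul, inv_mul_cancel, hg_one, hg_one] at this
  constructor
  · -- transitivity
    intro p q
    obtain ⟨a, ha⟩ : ∃ a : G, πhat p = QuotientGroup.mk a := (QuotientGroup.mk_surjective (πhat p)).imp fun _ h => h.symm
    obtain ⟨b, hb⟩ : ∃ b : G, πhat q = QuotientGroup.mk b :=
      (QuotientGroup.mk_surjective (πhat q)).imp fun _ h => h.symm
    have hπ : πhat (gAct (b * a⁻¹) p) = πhat q := by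
      rw [hπ_g, ha, hb]
      show QuotientGroup.mk (b * a⁻¹ * a) = (QuotientGroup.mk b : G ⧸ H)
      congr 1
      group
    obtain ⟨k, hk⟩ := hπ_fib _ _ hπ
    exact ⟨b * a⁻¹, k⁻¹, by rw [inv_inv, hgk, ← hk]⟩
  · intro p₀ hp₀
    refine ⟨⟨⟨⟨{x : G × K | gAct x.1 (kAct p₀ x.2⁻¹) = p₀}, ?_⟩, ?_⟩, ?_⟩, rfl, ?_, ?_⟩
    · -- mul mem
      rintro ⟨g, k⟩ ⟨g', k'⟩ h h'
      simp only [Set.mem_setOf_eq] at *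
      show gAct (g * g') (kAct p₀ (k * k')⁻¹) = p₀
      rw [mul_inv_rev, hk_mul, hg_mul, hgk, h', h]
    · -- one mem
      show gAct 1 (kAct p₀ 1⁻¹) = p₀
      rw [inv_one, hk_one, hg_one]
    · -- inv mem
      rintro ⟨g, k⟩ h
      simp only [Set.mem_setOf_eq] at *
      show gAct g⁻¹ (kAct p₀ (k⁻¹)⁻¹) = p₀
      rw [inv_inv]
      have : kAct p₀ k⁻¹ = gAct g⁻¹ p₀ := by
        apply hg_cancel g
        rw [h, ← hg_mul, mul_inv_cancel, hg_one]
      have h2 : p₀ = kAct (gAct g⁻¹ p₀) k := by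
        rw [← this, ← hk_mul, inv_mul_cancel, hk_one]
      rw [hgk, ← h2]
    · -- InjOn fst
      rintro ⟨g, k⟩ hgk1 ⟨g', k'⟩ hgk2 (h : g = g')
      simp only [SetLike.mem_coe, Subgroup.mem_mk, Set.mem_setOf_eq] at hgk1 hgk2
      subst h
      have := hg_cancel g _ _ (hgk1.trans hgk2.symm)
      have h3 : kAct p₀ (k'⁻¹ * k) = p₀ := by
        rw [hk_mul, ← this, ← hk_mul, inv_mul_cancel, hk_one]
      exact Prod.ext rfl (inv_mul_eq_one.mp (hk_free _ _ h3)).symm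
    · -- image = H
      ext g
      simp only [Set.mem_image, SetLike.mem_coe, Subgroup.mem_mk, Set.mem_setOf_eq]
      constructor
      · rintro ⟨⟨g', k⟩, hx, rfl⟩
        have : πhat p₀ = QuotientGroup.mk g' := by
          conv_lhs => rw [← hx]
          rw [hπ_g, hπ_k, hp₀]
          show QuotientGroup.mk (g' * 1) = (QuotientGroup.mk g' : G ⧸ H)
          rw [mul_one]
        rw [hp₀] at this
        have : (QuotientGroup.mk g' : G ⧸ H) = QuotientGroup.mk 1 := this.symm
        rwa [QuotientGroup.eq, mul_one, inv_mem_iff] at this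
      · intro hg
        have hπ : πhat p₀ = πhat (gAct g p₀) := by
          rw [hπ_g, hp₀]
          show (QuotientGroup.mk (1:G) : G ⧸ H) = QuotientGroup.mk (g * 1)
          rw [mul_one]
          exact (QuotientGroup.eq).mpr (by simpa using inv_mem hg)
        obtain ⟨k, hk⟩ := hπ_fib _ _ hπ
        refine ⟨(g, k), ?_, rfl⟩
        show gAct g (kAct p₀ k⁻¹) = p₀
        rw [hgk, hk, ← hk_mul, mul_inv_cancel, hk_one]
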